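/- Let K ⊂ ℝ^d be a nonempty compact set and let ψ be a feedforward neural network with depth L ∈ ℕ, widths w_i ∈ ℕ, and continuous nonpolynomial activation functions σ_1,…,σ_L. If a measure μ ∈ M(K) satisfies ∫_K ( a_{L+1} σ_L( a_L σ_{L−1}( ⋯ σ_1(a_1ᵀ x + c_1) ⋯ ) + c_L ) + c_{L+1} ) dμ(x) = 0 for all a_1 ∈ ℝ^d, all a_2, …, a_{L+1} ∈ ℝ, and all c_1, …, c_{L+1} ∈ ℝ, then μ = 0. -/

import Mathlib

open scoped BigOperators ENNReal NNReal

/-- Parameter space `D` of a feedforward network with `L` hidden layers and width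
function `w` (`w 0 = d` is the input dimension, hidden layer `i` has width `w i` for
`i = 1, …, L`, and the output layer has width one). The component for `i : Fin L`
consists of the weight matrix `A_{i+1}` and the bias vector `b_{i+1}`; the last
component consists of the output weights `A_{L+1}` and the output bias `b_{L+1}`. -/
abbrev Params (w : ℕ → ℕ) (L : ℕ) : Type :=
  (∀ i : Fin L, ((Fin (w (i + 1)) → Fin (w i) → ℝ) × (Fin (w (i + 1)) → ℝ))) ×
    ((Fin (w L) → ℝ) × ℝ)

/-- The number of degrees of freedom `m = Σ_{i=1}^{L+1} w_i (w_{i-1} + 1)` of the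
network (with `w_{L+1} = 1`). -/
def mdim (w : ℕ → ℕ) (L : ℕ) : ℕ :=
  (∑ i ∈ Finset.range L, w (i + 1) * (w i + 1)) + (w L + 1)

/-- Output of the first `k` hidden layers of the network. -/
noncomputable def hiddenOut (σ : ℕ → ℝ → ℝ) (w : ℕ → ℕ) (L : ℕ)
    (θ : ∀ i : Fin L, ((Fin (w (i + 1)) → Fin (w i) → ℝ) × (Fin (w (i + 1)) → ℝ))) :
    ∀ k : ℕ, k ≤ L → (Fin (w 0) → ℝ) → Fin (w k) → ℝ
  | 0, _, x => x
  | k + 1, h, x => fun i =>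
      σ (k + 1)
        ((∑ j, (θ ⟨k, h⟩).1 i j * hiddenOut σ w L θ k (Nat.le_of_succ_le h) x j) +
          (θ ⟨k, h⟩).2 i)

/-- The scalar output `ψ(α, x)` of the feedforward network. -/
noncomputable def netFun (σ : ℕ → ℝ → ℝ) (w : ℕ → ℕ) (L : ℕ) (α : Params w L)
    (x : Fin (w 0) → ℝ) : ℝ :=
  (∑ j, α.2.1 j * hiddenOut σ w L α.1 L le_rfl x j) + α.2.2

lemma continuous_hiddenOut {σ : ℕ → ℝ → ℝ} {w : ℕ → ℕ} {L : ℕ}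
    (hσ : ∀ i, 1 ≤ i → i ≤ L → Continuous (σ i))
    (θ : ∀ i : Fin L, ((Fin (w (i + 1)) → Fin (w i) → ℝ) × (Fin (w (i + 1)) → ℝ))) :
    ∀ (k : ℕ) (h : k ≤ L), Continuous fun x => hiddenOut σ w L θ k h x := by
  intro k
  induction k with
  | zero =>
      intro h
      simp only [hiddenOut]
      exact continuous_id
  | succ k ih =>
      intro h
      apply continuous_pi
      intro i
      simp only [hiddenOut]
      exact (hσ (k + 1) (Nat.succ_le_succ (Nat.zero_le _)) h).comp
        ((continuous_finset_sum _ fun j _ =>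
          continuous_const.mul ((continuous_apply j).comp (ih (Nat.le_of_succ_le h)))).add
          continuous_const)

lemma continuous_netFun {σ : ℕ → ℝ → ℝ} {w : ℕ → ℕ} {L : ℕ}
    (hσ : ∀ i, 1 ≤ i → i ≤ L → Continuous (σ i)) (α : Params w L) :
    Continuous fun x => netFun σ w L α x := by
  unfold netFun
  exact (continuous_finset_sum _ fun j _ =>
    continuous_const.mul
      ((continuous_apply j).comp (continuous_hiddenOut hσ α.1 L le_rfl))).add continuous_const

/-- The parameter-to-realization map `Ψ : D → C(K)`. -/
noncomputable def Psi (σ : ℕ → ℝ → ℝ) (w : ℕ → ℕ) (L : ℕ)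
    (hσ : ∀ i, 1 ≤ i → i ≤ L → Continuous (σ i)) (K : Set (Fin (w 0) → ℝ))
    (α : Params w L) : C(K, ℝ) :=
  ⟨fun x => netFun σ w L α x, (continuous_netFun hσ α).comp continuous_subtype_val⟩

/-- The affine function `z_{a,c} : x ↦ aᵀ x + c` as an element of `C(K)`. -/
noncomputable def affineCM {n : ℕ} (K : Set (Fin n → ℝ)) (a : Fin n → ℝ) (c : ℝ) :
    C(K, ℝ) :=
  ⟨fun x => (∑ j, a j * (x : Fin n → ℝ) j) + c,
    (continuous_finset_sum _ fun j _ =>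
      continuous_const.mul ((continuous_apply j).comp continuous_subtype_val)).add
      continuous_const⟩

/-- The constant function `z_c : x ↦ c` as an element of `C(K)`. -/
noncomputable def constCM {n : ℕ} (K : Set (Fin n → ℝ)) (c : ℝ) : C(K, ℝ) :=
  ⟨fun _ => c, continuous_const⟩

/-- A function `ℝ → ℝ` is nonpolynomial if it is not the restriction of a polynomial. -/
def IsNonpolynomial (σ : ℝ → ℝ) : Prop :=
  ¬ ∃ p : Polynomial ℝ, ∀ x : ℝ, σ x = p.eval x

/-- `𝓛` is Gâteaux differentiable in its first argument at `(v, y)` with partial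
derivative (identified with an element of `M(K) = C(K)*`) given by the continuous
linear functional `T`. -/
def HasGateauxDerivFirst {n : ℕ} {K : Set (Fin n → ℝ)}
    (𝓛 : C(K, ℝ) → C(K, ℝ) → ℝ) (v y : C(K, ℝ)) (T : C(K, ℝ) →L[ℝ] ℝ) : Prop :=
  ∀ h : C(K, ℝ), Filter.Tendsto (fun s : ℝ => (𝓛 (v + s • h) y - 𝓛 v y) / s)
    (nhdsWithin 0 (Set.Ioi 0)) (nhds (T h))

-- ===== auxiliary lemmas =====


open Polynomial in
lemma exists_antideriv (q : Polynomial ℝ) :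
    ∃ P : Polynomial ℝ, P.derivative = q ∧ P.degree ≤ q.degree + 1 := by
  refine ⟨∑ n ∈ Finset.range (q.natDegree + 1), C (q.coeff n / (n + 1)) * X ^ (n + 1), ?_, ?_⟩
  · rw [map_sum]
    conv_rhs => rw [q.as_sum_range' (q.natDegree + 1) (Nat.lt_succ_self _)]
    refine Finset.sum_congr rfl fun n _ => ?_
    rw [derivative_C_mul_X_pow]
    have : (q.coeff n / (n + 1) * (n + 1) : ℝ) = q.coeff n := by
      field_simp
    simp [this, C_mul_X_pow_eq_monomial]
  · rcases eq_or_ne q 0 with rfl | hq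
    · simp
    · refine (degree_sum_le _ _).trans ?_
      rw [degree_eq_natDegree hq]
      refine Finset.sup_le fun n hn => (degree_C_mul_X_pow_le _ _).trans ?_
      rw [Finset.mem_range, Nat.lt_succ_iff] at hn
      exact_mod_cast Nat.add_le_add_right hn 1

open Polynomial in
lemma poly_of_iteratedDeriv_zero :
    ∀ (k : ℕ) (f : ℝ → ℝ), ContDiff ℝ ((⊤:ℕ∞) : WithTop ℕ∞) f → (∀ x, iteratedDeriv k f x = 0) →
      ∃ p : Polynomial ℝ, p.degree < (k : WithBot ℕ) ∧ ∀ x, f x = p.eval x := by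
  intro k
  induction k with
  | zero =>
      intro f _ h
      refine ⟨0, by simp [Nat.cast_zero], fun x => by simpa [iteratedDeriv_zero] using h x⟩
  | succ k ih =>
      intro f hf h
      have hdf : ContDiff ℝ ((⊤:ℕ∞) : WithTop ℕ∞) (deriv f) := by simpa using ContDiff.iterate_deriv 1 hf
      have h' : ∀ x, iteratedDeriv k (deriv f) x = 0 := by
        intro x
        have := h x
        rwa [iteratedDeriv_succ'] at this
      obtain ⟨q, hq, hfq⟩ := ih (deriv f) hdf h'
      obtain ⟨P, hPd, hPdeg⟩ := exists_antideriv q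
      have hconst : ∀ x, f x - P.eval x = f 0 - P.eval 0 := by
        intro x
        have : ∀ y : ℝ, HasDerivAt (fun z => f z - P.eval z) 0 y := by
          intro y
          have h1 : HasDerivAt f (q.eval y) y := by
            have := (hf.differentiable (by simp)).differentiableAt (x := y)
            simpa [hfq y] using this.hasDerivAt
          have h2 : HasDerivAt (fun z => P.eval z) (q.eval y) y := by
            simpa [hPd] using P.hasDerivAt y
          have := h1.sub h2
          rw [sub_self] at this
          exact this
        have := is_const_of_deriv_eq_zero (f := fun z => f z - P.eval z)
          (fun y => ((this y).differentiableAt)) (fun y => (this y).deriv) x 0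
        simpa using this
      refine ⟨P + C (f 0 - P.eval 0), ?_, ?_⟩
      · have h1 : (P + C (f 0 - P.eval 0)).degree ≤ max P.degree (C (f 0 - P.eval 0)).degree :=
          degree_add_le _ _
        have h2 : (C (f 0 - P.eval 0) : Polynomial ℝ).degree ≤ 0 := degree_C_le
        have hk1 : P.degree < ((k + 1 : ℕ) : WithBot ℕ) := by
          refine hPdeg.trans_lt ?_
          have h3 := WithBot.add_lt_add_right (show (1 : WithBot ℕ) ≠ ⊥ by simp) hq
          have h4 : ((k : WithBot ℕ) + 1) = ((k + 1 : ℕ) : WithBot ℕ) := by push_cast; ring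
          rwa [h4] at h3
        refine h1.trans_lt (max_lt hk1 (h2.trans_lt ?_))
        exact_mod_cast WithBot.coe_lt_coe.mpr (Nat.succ_pos k)
      · intro x
        have := hconst x
        simp only [eval_add, eval_C]
        linarith


/-- The element `t ↦ t^k ψ(a t + b)` of `C(J, ℝ)`. -/
noncomputable def monRes (J : Set ℝ) (ψ : ℝ → ℝ) (hψ : Continuous ψ) (k : ℕ) (a b : ℝ) :
    C(J, ℝ) :=
  ⟨fun t => (t : ℝ) ^ k * ψ (a * t + b),
   (continuous_subtype_val.pow k).mul (hψ.comp
     ((continuous_const.mul continuous_subtype_val).add continuous_const))⟩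

lemma hasDerivAt_monRes (J : Set ℝ) (hJ : IsCompact J) [CompactSpace J]
    (ψ : ℝ → ℝ) (hψ : ContDiff ℝ 1 ψ) (k : ℕ) (a b : ℝ) :
    HasDerivAt (fun s : ℝ => monRes J ψ hψ.continuous k s b)
      (monRes J (deriv ψ) (hψ.continuous_deriv (by exact_mod_cast le_rfl)) (k + 1) a b) a := by
  obtain ⟨r, hr⟩ := hJ.isBounded.subset_closedBall 0
  set M : ℝ := max r 0 with hM
  have hM0 : 0 ≤ M := le_max_right _ _
  have hMJ : ∀ t : J, |(t : ℝ)| ≤ M := by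
    intro t
    have := hr t.2
    simp only [Metric.mem_closedBall, Real.dist_eq, sub_zero] at this
    exact this.trans (le_max_left _ _)
  set ψ' := deriv ψ with hψ'
  have hψ'c : Continuous ψ' := hψ.continuous_deriv (by exact_mod_cast le_rfl)
  have hψd : Differentiable ℝ ψ := hψ.differentiable (by simp)
  set R : ℝ := |a| * M + |b| + M + 1 with hR
  have huc : UniformContinuousOn ψ' (Metric.closedBall (0:ℝ) R) :=
    (isCompact_closedBall 0 R).uniformContinuousOn_of_continuous hψ'c.continuousOn
  rw [hasDerivAt_iff_isLittleO, Asymptotics.isLittleO_iff]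
  intro C hC
  set ε' : ℝ := C / (M + 1) ^ (k + 1) with hε'
  have hε'0 : 0 < ε' := by positivity
  obtain ⟨δ', hδ'0, hδ'⟩ := Metric.uniformContinuousOn_iff.mp huc ε' hε'0
  set δ : ℝ := min 1 (δ' / (M + 1)) with hδ
  have hδ0 : 0 < δ := lt_min one_pos (by positivity)
  rw [Filter.eventually_iff_exists_mem]
  refine ⟨Metric.ball a δ, Metric.ball_mem_nhds a hδ0, ?_⟩
  intro x hx
  rw [Metric.mem_ball, Real.dist_eq] at hx
  have key : ∀ t : J, |(t:ℝ)^k * ψ (x * t + b) - (t:ℝ)^k * ψ (a * t + b)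
      - (x - a) * ((t:ℝ)^(k+1) * ψ' (a * t + b))| ≤ C * |x - a| := by
    intro t
    set x₀ : ℝ := a * t + b with hx₀
    set u : ℝ := (x - a) * t with hu
    have hut : x * t + b = x₀ + u := by ring
    have hu_le : |u| ≤ M * |x - a| := by
      rw [hu, abs_mul, mul_comm]
      exact mul_le_mul_of_nonneg_right (hMJ t) (abs_nonneg _)
    have hu_lt_δ' : |u| < δ' := by
      calc |u| ≤ M * |x - a| := hu_le
        _ < (M + 1) * δ := by
            apply mul_lt_mul' (by linarith) hx (abs_nonneg _) (by linarith)
        _ ≤ (M + 1) * (δ' / (M + 1)) := by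
            exact mul_le_mul_of_nonneg_left (min_le_right _ _) (by linarith)
        _ = δ' := by field_simp
    have hu_le_M : |u| ≤ M := by
      refine hu_le.trans ?_
      calc M * |x - a| ≤ M * 1 := by
            refine mul_le_mul_of_nonneg_left ?_ hM0
            exact le_of_lt (lt_of_lt_of_le hx (min_le_left _ _))
        _ = M := mul_one M
    have hx₀B : ∀ z ∈ Metric.closedBall x₀ |u|, z ∈ Metric.closedBall (0:ℝ) R := by
      intro z hz
      rw [Metric.mem_closedBall, Real.dist_eq, sub_zero]
      rw [Metric.mem_closedBall, Real.dist_eq] at hz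
      have h1 : |x₀| ≤ |a| * M + |b| := by
        rw [hx₀]
        refine (abs_add_le _ _).trans ?_
        rw [abs_mul]
        exact add_le_add (mul_le_mul_of_nonneg_left (hMJ t) (abs_nonneg a)) le_rfl
      calc |z| ≤ |x₀| + |u| := by
            have := abs_sub_abs_le_abs_sub z x₀
            linarith [abs_nonneg (z - x₀)]
        _ ≤ (|a| * M + |b|) + M := add_le_add h1 hu_le_M
        _ ≤ R := by rw [hR]; linarith
    -- MVT estimate
    have hinner : |ψ (x₀ + u) - ψ x₀ - u * ψ' x₀| ≤ ε' * |u| := by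
      have hder : ∀ z ∈ Metric.closedBall x₀ |u|,
          HasDerivWithinAt (fun z => ψ z - z * ψ' x₀) (ψ' z - ψ' x₀)
            (Metric.closedBall x₀ |u|) z := by
        intro z _
        have h0 : HasDerivAt (fun z => ψ z - z * ψ' x₀) (ψ' z - ψ' x₀) z := by
          have := ((hψd z).hasDerivAt.sub ((hasDerivAt_id z).mul_const (ψ' x₀)))
          rw [one_mul] at this
          exact this
        exact h0.hasDerivWithinAt
      have hbound : ∀ z ∈ Metric.closedBall x₀ |u|, ‖ψ' z - ψ' x₀‖ ≤ ε' := by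
        intro z hz
        have h1 := hδ' z (hx₀B z hz) x₀ (hx₀B x₀ (Metric.mem_closedBall_self (abs_nonneg u)))
          (lt_of_le_of_lt (Metric.mem_closedBall.mp hz) hu_lt_δ')
        rw [Real.dist_eq] at h1
        exact le_of_lt h1
      have hmem1 : x₀ ∈ Metric.closedBall x₀ |u| := Metric.mem_closedBall_self (abs_nonneg u)
      have hmem2 : x₀ + u ∈ Metric.closedBall x₀ |u| := by
        rw [Metric.mem_closedBall, Real.dist_eq]
        simp
      have := (convex_closedBall x₀ |u|).norm_image_sub_le_of_norm_hasDerivWithin_le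
        hder hbound hmem1 hmem2
      simp only [Real.norm_eq_abs, add_sub_cancel_left] at this
      calc |ψ (x₀ + u) - ψ x₀ - u * ψ' x₀|
          = |(ψ (x₀+u) - (x₀+u) * ψ' x₀) - (ψ x₀ - x₀ * ψ' x₀)| := by ring_nf
        _ ≤ ε' * |u| := this
    have hfactor : (t:ℝ)^k * ψ (x * t + b) - (t:ℝ)^k * ψ (a * t + b)
        - (x - a) * ((t:ℝ)^(k+1) * ψ' (a * t + b))
        = (t:ℝ)^k * (ψ (x₀ + u) - ψ x₀ - u * ψ' x₀) := by
      rw [hut, hx₀, hu]; ring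
    rw [hfactor, abs_mul, abs_pow]
    calc |(t:ℝ)|^k * |ψ (x₀ + u) - ψ x₀ - u * ψ' x₀|
        ≤ M^k * (ε' * |u|) := by
          apply mul_le_mul (pow_le_pow_left₀ (abs_nonneg _) (hMJ t) k) hinner (abs_nonneg _)
          positivity
      _ ≤ M^k * (ε' * (M * |x - a|)) := by
          refine mul_le_mul_of_nonneg_left (mul_le_mul_of_nonneg_left hu_le (le_of_lt hε'0)) (by positivity)
      _ = ε' * (M^(k+1)) * |x - a| := by ring
      _ ≤ ε' * ((M+1)^(k+1)) * |x - a| := by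
          refine mul_le_mul_of_nonneg_right (mul_le_mul_of_nonneg_left ?_ (le_of_lt hε'0)) (abs_nonneg _)
          exact pow_le_pow_left₀ hM0 (by linarith) _
      _ = C * |x - a| := by
          rw [hε']; field_simp
  -- assemble the sup-norm bound
  rw [Real.norm_eq_abs]
  refine ContinuousMap.norm_le _ (by positivity) |>.mpr ?_
  intro t
  simp only [ContinuousMap.sub_apply, ContinuousMap.smul_apply, monRes, ContinuousMap.coe_mk,
    smul_eq_mul, Real.norm_eq_abs]
  exact key t
open MeasureTheory Convolution in
noncomputable def smoothed (f : ℝ → ℝ) (φ : ContDiffBump (0:ℝ)) : ℝ → ℝ :=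
  (φ.normed volume) ⋆[ContinuousLinearMap.lsmul ℝ ℝ, volume] f

open MeasureTheory Convolution in
lemma smoothed_apply (f : ℝ → ℝ) (φ : ContDiffBump (0:ℝ)) (x : ℝ) :
    smoothed f φ x = ∫ y, φ.normed volume y • f (x - y) := by
  rw [smoothed, convolution_def]
  simp [ContinuousLinearMap.lsmul_apply]

open MeasureTheory Convolution Filter Polynomial Topology in
lemma leshno (J : Set ℝ) (hJc : IsCompact J)
    (f : ℝ → ℝ) (hfc : Continuous f)
    (hfnp : ¬ ∃ p : Polynomial ℝ, ∀ x : ℝ, f x = p.eval x)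
    (ν : C(J, ℝ) →L[ℝ] ℝ)
    (hν : ∀ a b : ℝ, ν (monRes J f hfc 0 a b) = 0) :
    ν = 0 := by
  haveI : CompactSpace J := isCompact_iff_compactSpace.mp hJc
  -- the smoothed activations
  set ρ : ContDiffBump (0:ℝ) → ℝ → ℝ := fun φ => smoothed f φ with hρ
  have hρsm : ∀ φ : ContDiffBump (0:ℝ), ContDiff ℝ ((⊤:ℕ∞) : WithTop ℕ∞) (ρ φ) :=
    fun φ => φ.hasCompactSupport_normed.contDiff_convolution_left _
      φ.contDiff_normed (hfc.locallyIntegrable)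
  have hρc : ∀ φ : ContDiffBump (0:ℝ), Continuous (ρ φ) := fun φ => (hρsm φ).continuous
  -- Step A : ν annihilates ridge functions of the smoothed activation
  have stepA : ∀ (φ : ContDiffBump (0:ℝ)) (a b : ℝ), ν (monRes J (ρ φ) (hρc φ) 0 a b) = 0 := by
    intro φ a b
    set F : C(ℝ × J, ℝ) :=
      ⟨fun p => f (a * p.2 + (b - p.1)),
        hfc.comp ((continuous_const.mul (continuous_subtype_val.comp continuous_snd)).add
          (continuous_const.sub continuous_fst))⟩ with hF
    set G : ℝ → C(J, ℝ) := fun y => φ.normed volume y • F.curry y with hG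
    have hGc : Continuous G := (φ.continuous_normed).smul F.curry.continuous
    have hGsupp : HasCompactSupport G := by
      apply HasCompactSupport.smul_right (φ.hasCompactSupport_normed)
    have hGint : Integrable G volume := hGc.integrable_of_hasCompactSupport hGsupp
    have hint : ν (∫ y, G y) = ∫ y, ν (G y) := (ContinuousLinearMap.integral_comp_comm ν hGint).symm
    have hzero : ∀ y, ν (G y) = 0 := by
      intro y
      have hcur : F.curry y = monRes J f hfc 0 a (b - y) := by
        ext t
        simp [monRes, hF]
      rw [hG]
      simp only [ContinuousLinearMap.map_smul, smul_eq_mul]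
      rw [hcur, hν a (b - y), mul_zero]
    have heq : (∫ y, G y) = monRes J (ρ φ) (hρc φ) 0 a b := by
      ext t
      have hev := ContinuousLinearMap.integral_comp_comm
        (ContinuousMap.evalCLM ℝ t) hGint
      have h1 : (∫ y, G y) t = ∫ y, (G y) t := by
        exact (hev).symm
      rw [h1]
      simp only [monRes, ContinuousMap.coe_mk, pow_zero, one_mul]
      rw [hρ]
      show (∫ (y : ℝ), (G y) t) = smoothed f φ (a * (t:ℝ) + b)
      rw [smoothed_apply]
      congr 1
      ext y
      simp only [hG, ContinuousMap.smul_apply, smul_eq_mul, ContinuousMap.curry_apply,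
        ContinuousMap.coe_mk, hF]
      congr 2
      ring
    rw [← heq, hint]
    simp [hzero]
  -- smoothness of iterated derivatives
  have hsmo : ∀ (φ : ContDiffBump (0:ℝ)) (k : ℕ),
      ContDiff ℝ ((⊤:ℕ∞) : WithTop ℕ∞) (iteratedDeriv k (ρ φ)) := by
    intro φ k
    rw [iteratedDeriv_eq_iterate]
    exact ContDiff.iterate_deriv k (hρsm φ)
  -- Step C : differentiate under ν
  have stepC : ∀ (φ : ContDiffBump (0:ℝ)) (k : ℕ) (a b : ℝ),
      ν (monRes J (iteratedDeriv k (ρ φ)) (hsmo φ k).continuous k a b) = 0 := by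
    intro φ k
    induction k with
    | zero =>
        intro a b
        have hEq : monRes J (iteratedDeriv 0 (ρ φ)) (hsmo φ 0).continuous 0 a b
            = monRes J (ρ φ) (hρc φ) 0 a b := by
          ext t
          simp [monRes, iteratedDeriv_zero]
        rw [hEq]
        exact stepA φ a b
    | succ k ih =>
        intro a b
        have hψ1 : ContDiff ℝ 1 (iteratedDeriv k (ρ φ)) :=
          (hsmo φ k).of_le (by exact_mod_cast le_top)
        have hcur := hasDerivAt_monRes J hJc (iteratedDeriv k (ρ φ)) hψ1 k a b
        have hder : HasDerivAt
            (fun s : ℝ => ν (monRes J (iteratedDeriv k (ρ φ)) hψ1.continuous k s b))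
            (ν (monRes J (deriv (iteratedDeriv k (ρ φ)))
              (hψ1.continuous_deriv (by exact_mod_cast le_rfl)) (k + 1) a b)) a :=
          (ν.hasFDerivAt).comp_hasDerivAt a hcur
        have hzero : (fun s : ℝ => ν (monRes J (iteratedDeriv k (ρ φ)) hψ1.continuous k s b))
            = fun _ => (0:ℝ) := funext fun s => ih s b
        rw [hzero] at hder
        have huniq := hder.unique (hasDerivAt_const a (0:ℝ))
        have hEq : monRes J (deriv (iteratedDeriv k (ρ φ)))
              (hψ1.continuous_deriv (by exact_mod_cast le_rfl)) (k+1) a b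
            = monRes J (iteratedDeriv (k+1) (ρ φ)) (hsmo φ (k+1)).continuous (k+1) a b := by
          ext t
          simp [monRes, iteratedDeriv_succ]
        rw [← hEq]
        exact huniq
  -- the monomials
  set mon : ℕ → C(J, ℝ) := fun k => monRes J (fun _ => (1:ℝ)) continuous_const k 0 0 with hmon_def
  have hEval : ∀ (φ : ContDiffBump (0:ℝ)) (k : ℕ) (b : ℝ),
      iteratedDeriv k (ρ φ) b * ν (mon k) = 0 := by
    intro φ k b
    have h0 := stepC φ k 0 b
    have hEq : monRes J (iteratedDeriv k (ρ φ)) (hsmo φ k).continuous k 0 b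
        = iteratedDeriv k (ρ φ) b • mon k := by
      ext t
      simp [monRes, hmon_def]
      ring
    rw [hEq, ContinuousLinearMap.map_smul, smul_eq_mul] at h0
    exact h0
  have hmon : ∀ k, ν (mon k) = 0 := by
    by_contra hcon
    push_neg at hcon
    obtain ⟨k, hk⟩ := hcon
    have hderiv0 : ∀ (φ : ContDiffBump (0:ℝ)) (b : ℝ), iteratedDeriv k (ρ φ) b = 0 := by
      intro φ b
      rcases mul_eq_zero.mp (hEval φ k b) with h | h
      · exact h
      · exact absurd h hk
    have hpoly : ∀ φ : ContDiffBump (0:ℝ),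
        ∃ p : Polynomial ℝ, p.degree < (k : WithBot ℕ) ∧ ∀ x, ρ φ x = p.eval x :=
      fun φ => poly_of_iteratedDeriv_zero k (ρ φ) (hρsm φ) (hderiv0 φ)
    -- mollifier sequence
    have hposn : ∀ n : ℕ, (0:ℝ) < (n:ℝ) + 1 := fun n => by positivity
    set φn : ℕ → ContDiffBump (0:ℝ) := fun n =>
      ⟨1/(2*((n:ℝ)+1)), 1/((n:ℝ)+1), by positivity, by
        rw [div_lt_div_iff₀ (by positivity) (by positivity)]
        nlinarith [hposn n]⟩ with hφn
    have hrOut : Filter.Tendsto (fun n => (φn n).rOut) atTop (𝓝 0) := by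
      simpa [hφn, one_div] using
        (tendsto_one_div_add_atTop_nhds_zero_nat : Tendsto (fun n : ℕ => 1 / ((n:ℝ) + 1)) atTop (𝓝 0))
    have hconv : ∀ x : ℝ, Filter.Tendsto (fun n => ρ (φn n) x) atTop (𝓝 (f x)) := by
      intro x
      have := ContDiffBump.convolution_tendsto_right_of_continuous (μ := volume)
        (φ := φn) hrOut hfc x
      simpa [hρ, smoothed] using this
    choose p hpdeg hpeval using fun n => hpoly (φn n)
    set sk : Finset ℕ := Finset.range k with hsk
    set v : ℕ → ℝ := fun i => (i:ℝ) with hv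
    have hvs : Set.InjOn v sk := fun i _ j _ h => Nat.cast_injective h
    have hcard : ∀ n, (p n).degree < sk.card := by
      intro n
      rw [hsk, Finset.card_range]
      exact hpdeg n
    have hpn : ∀ n, Lagrange.interpolate sk v (fun i => (p n).eval (v i)) = p n :=
      fun n => (Lagrange.eq_interpolate hvs (hcard n)).symm
    refine hfnp ⟨Lagrange.interpolate sk v (fun i => f (v i)), fun x => ?_⟩
    have h1 : Filter.Tendsto (fun n => (p n).eval x) atTop (𝓝 (f x)) :=
      (hconv x).congr (fun n => hpeval n x)
    have hform : ∀ n, (p n).eval x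
        = ∑ i ∈ sk, ρ (φn n) (v i) * (Lagrange.basis sk v i).eval x := by
      intro n
      conv_lhs => rw [← hpn n]
      rw [Lagrange.interpolate_apply, Polynomial.eval_finset_sum]
      refine Finset.sum_congr rfl fun i _ => ?_
      rw [Polynomial.eval_mul, Polynomial.eval_C, hpeval]
    have hPform : (Lagrange.interpolate sk v (fun i => f (v i))).eval x
        = ∑ i ∈ sk, f (v i) * (Lagrange.basis sk v i).eval x := by
      rw [Lagrange.interpolate_apply, Polynomial.eval_finset_sum]
      exact Finset.sum_congr rfl fun i _ => by rw [Polynomial.eval_mul, Polynomial.eval_C]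
    have h2 : Filter.Tendsto (fun n => (p n).eval x) atTop
        (𝓝 ((Lagrange.interpolate sk v (fun i => f (v i))).eval x)) := by
      simp only [hform]
      rw [hPform]
      exact tendsto_finset_sum _ fun i _ => ((hconv (v i)).mul_const _)
    exact tendsto_nhds_unique h1 h2
  -- conclude by Stone-Weierstrass
  set XC : C(J, ℝ) := ⟨fun t => (t:ℝ), continuous_subtype_val⟩ with hXC
  have hXn : ∀ n : ℕ, ν (XC ^ n) = 0 := by
    intro n
    have hEq : XC ^ n = mon n := by
      ext t
      simp [hXC, hmon_def, monRes]
    rw [hEq]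
    exact hmon n
  set A : Subalgebra ℝ C(J, ℝ) := Algebra.adjoin ℝ {XC} with hA
  have hAzero : ∀ g ∈ A, ν g = 0 := by
    intro g hg
    rw [hA, Algebra.adjoin_singleton_eq_range_aeval] at hg
    obtain ⟨q, rfl⟩ := hg
    induction q using Polynomial.induction_on' with
    | add r q hr hq => rw [map_add, map_add, hr, hq, add_zero]
    | monomial n c =>
        show ν ((Polynomial.aeval XC) ((Polynomial.monomial n) c)) = 0
        rw [Polynomial.aeval_monomial, ← Algebra.smul_def, ContinuousLinearMap.map_smul,
          hXn n, smul_zero]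
  have hsep : A.SeparatesPoints := by
    intro t1 t2 hne
    refine ⟨_, ⟨XC, Algebra.self_mem_adjoin_singleton ℝ XC, rfl⟩, ?_⟩
    simp only [hXC, ContinuousMap.coe_mk]
    exact fun h => hne (Subtype.ext h)
  have htop : A.topologicalClosure = ⊤ :=
    ContinuousMap.subalgebra_topologicalClosure_eq_top_of_separatesPoints A hsep
  have hdense : Dense (A : Set C(J, ℝ)) := by
    rw [dense_iff_closure_eq, ← Subalgebra.topologicalClosure_coe, htop]
    simp
  ext g
  show ν g = 0
  exact congrFun (Continuous.ext_on hdense ν.continuous continuous_const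
    (fun g hg => hAzero g hg)) g

/-- Precomposition with a continuous map, as a continuous linear map. -/
noncomputable def pullCLM {X Y : Type*} [TopologicalSpace X] [TopologicalSpace Y]
    (v : C(X, Y)) : C(Y, ℝ) →L[ℝ] C(X, ℝ) where
  toFun g := g.comp v
  map_add' g h := by ext x; simp
  map_smul' c g := by ext x; simp
  cont := ContinuousMap.continuous_precomp v

/-- `hiddenOut` only depends on the parameters of the first `k` layers. -/
lemma hiddenOut_congr (σ : ℕ → ℝ → ℝ) (w : ℕ → ℕ) (L : ℕ)
    (θ θ' : ∀ i : Fin L, ((Fin (w (i + 1)) → Fin (w i) → ℝ) × (Fin (w (i + 1)) → ℝ))) :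
    ∀ (k : ℕ) (h : k ≤ L), (∀ i : Fin L, (i : ℕ) < k → θ i = θ' i) →
      ∀ x, hiddenOut σ w L θ k h x = hiddenOut σ w L θ' k h x := by
  intro k
  induction k with
  | zero => intro h _ x; rfl
  | succ k ih =>
      intro h hagree x
      funext i
      simp only [hiddenOut]
      rw [ih (Nat.le_of_succ_le h) (fun i hi => hagree i (Nat.lt_succ_of_lt hi)) x,
        hagree ⟨k, h⟩ (Nat.lt_succ_self k)]

/-- the key step : if `T ∘ (precomposition with u)` annihilates the ridge functions of a
nonpolynomial activation, it annihilates every continuous function of `u`. -/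
lemma key_step {d : ℕ} {K : Set (Fin d → ℝ)} (hKc : IsCompact K)
    (T : C(K, ℝ) →L[ℝ] ℝ) (u : C(K, ℝ)) (s : ℝ → ℝ) (hs : Continuous s)
    (hsnp : IsNonpolynomial s)
    (hann : ∀ a b : ℝ, T ⟨fun x => s (a * u x + b),
      hs.comp ((continuous_const.mul u.continuous).add continuous_const)⟩ = 0)
    (g : ℝ → ℝ) (hg : Continuous g) :
    T ⟨fun x => g (u x), hg.comp u.continuous⟩ = 0 := by
  haveI : CompactSpace K := isCompact_iff_compactSpace.mp hKc
  set J : Set ℝ := Set.range (⇑u) with hJ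
  have hJc : IsCompact J := isCompact_range u.continuous
  haveI : CompactSpace J := isCompact_iff_compactSpace.mp hJc
  set v' : C(K, J) := ⟨fun x => ⟨u x, Set.mem_range_self x⟩,
    Continuous.subtype_mk u.continuous _⟩ with hv'
  set ν : C(J, ℝ) →L[ℝ] ℝ := T.comp (pullCLM v') with hν
  have hνann : ∀ a b : ℝ, ν (monRes J s hs 0 a b) = 0 := by
    intro a b
    show T ((monRes J s hs 0 a b).comp v') = 0
    have hEq : (monRes J s hs 0 a b).comp v'
        = ⟨fun x => s (a * u x + b),
            hs.comp ((continuous_const.mul u.continuous).add continuous_const)⟩ := by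
      ext x
      simp [monRes, hv']
    rw [hEq]
    exact hann a b
  have h0 := leshno J hJc s hs hsnp ν hνann
  have h1 : ν (⟨fun t => g (t : ℝ), hg.comp continuous_subtype_val⟩ : C(J, ℝ)) = 0 := by
    rw [h0]; rfl
  have h2 : (⟨fun t => g (t : ℝ), hg.comp continuous_subtype_val⟩ : C(J, ℝ)).comp v'
      = ⟨fun x => g (u x), hg.comp u.continuous⟩ := by
    ext x; rfl
  show T ⟨fun x => g (u x), hg.comp u.continuous⟩ = 0
  rw [← h2]
  exact h1


/-- **Key step in the proof of Theorem 4.2.** Let `σ_1, …, σ_L` be continuous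
nonpolynomial activation functions. If a measure `μ ∈ M(K) = C(K)*` (identified with
a continuous linear functional `T` on `C(K)`) annihilates all realizations
`x ↦ a_{L+1} σ_L( a_L σ_{L-1}( ⋯ σ_1(a_1ᵀ x + c_1) ⋯ ) + c_L ) + c_{L+1}` of the
depth-`L` feedforward network all of whose hidden layers have width one, then
`μ = 0`. -/
theorem annihilator_of_width_one_networks_is_zero
    (d L : ℕ) (hd : 0 < d) (hL : 0 < L)
    (σ : ℕ → ℝ → ℝ)
    (hσ : ∀ i, 1 ≤ i → i ≤ L → Continuous (σ i))
    (hσnp : ∀ i, 1 ≤ i → i ≤ L → IsNonpolynomial (σ i))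
    (K : Set (Fin d → ℝ)) (hKne : K.Nonempty) (hKc : IsCompact K)
    (T : C(K, ℝ) →L[ℝ] ℝ)
    (hT : ∀ α : Params (fun k => match k with | 0 => d | _ + 1 => 1) L,
      T (Psi σ (fun k => match k with | 0 => d | _ + 1 => 1) L hσ K α) = 0) :
    T = 0 := by
  classical
  haveI : CompactSpace K := isCompact_iff_compactSpace.mp hKc
  set w : ℕ → ℕ := fun k => match k with | 0 => d | _ + 1 => 1 with hw
  have contAff : ∀ (θ : ∀ i : Fin L, ((Fin (w (i + 1)) → Fin (w i) → ℝ) × (Fin (w (i + 1)) → ℝ)))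
      (k : ℕ) (hk : k ≤ L) (a : Fin (w k) → ℝ) (c : ℝ),
      Continuous (fun x : K => (∑ j, a j * hiddenOut σ w L θ k hk (↑x) j) + c) := by
    intro θ k hk a c
    exact ((continuous_finset_sum _ fun j _ =>
      continuous_const.mul (((continuous_apply j).comp
        (continuous_hiddenOut hσ θ k hk)).comp continuous_subtype_val))).add continuous_const
  -- the downward induction on layers
  have main : ∀ (m k : ℕ), k + m + 1 = L → ∀ (hk : k ≤ L)
      (θ : ∀ i : Fin L, ((Fin (w (i + 1)) → Fin (w i) → ℝ) × (Fin (w (i + 1)) → ℝ)))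
      (a : Fin (w k) → ℝ) (c : ℝ) (g : ℝ → ℝ) (hg : Continuous g),
      T ⟨fun x => g ((∑ j, a j * hiddenOut σ w L θ k hk (↑x) j) + c),
        hg.comp (contAff θ k hk a c)⟩ = 0 := by
    intro m
    induction m with
    | zero =>
        intro k hmk hk θ a c g hg
        have hkL : k + 1 = L := by omega
        subst hkL
        set u : C(K, ℝ) := ⟨fun x => (∑ j, a j * hiddenOut σ w (k+1) θ k hk (↑x) j) + c,
          contAff θ k hk a c⟩ with hu
        refine key_step hKc T u (σ (k+1)) (hσ (k+1) (Nat.succ_le_succ (Nat.zero_le _)) le_rfl)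
          (hσnp (k+1) (Nat.succ_le_succ (Nat.zero_le _)) le_rfl) ?_ g hg
        intro α β
        set θ' := Function.update θ ⟨k, Nat.lt_succ_self k⟩
          ((fun _ j => α * a j), (fun _ => α * c + β)) with hθ'
        have hagree : ∀ i : Fin (k+1), (i : ℕ) < k → θ' i = θ i := by
          intro i hi
          rw [hθ']
          exact Function.update_of_ne (fun hEq => by
            rw [hEq] at hi
            exact Nat.lt_irrefl k hi) _ _
        have hhid : ∀ (hk1 : k + 1 ≤ k + 1) (x : K),
            hiddenOut σ w (k+1) θ' (k+1) hk1 (↑x) 0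
              = σ (k+1) (α * ((∑ j, a j * hiddenOut σ w (k+1) θ k hk (↑x) j) + c) + β) := by
          intro hk1 x
          simp only [hiddenOut]
          rw [hiddenOut_congr σ w (k+1) θ' θ k (Nat.le_of_succ_le hk1) hagree]
          have hval : θ' ⟨k, hk1⟩ = ((fun _ j => α * a j), (fun _ => α * c + β)) := by
            rw [hθ']
            exact Function.update_self _ _ _
          rw [hval]
          congr 1
          have hs : (∑ j, (α * a j) * hiddenOut σ w (k+1) θ k (Nat.le_of_succ_le hk1) (↑x) j)
              = α * (∑ j, a j * hiddenOut σ w (k+1) θ k (Nat.le_of_succ_le hk1) (↑x) j) := by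
            rw [Finset.mul_sum]
            exact Finset.sum_congr rfl fun j _ => by ring
          have hproof : hiddenOut σ w (k+1) θ k (Nat.le_of_succ_le hk1) (↑x : Fin (w 0) → ℝ)
              = hiddenOut σ w (k+1) θ k hk (↑x : Fin (w 0) → ℝ) := rfl
          rw [hproof] at hs
          rw [hs]
          ring
        have h := hT (θ', ((fun _ => (1:ℝ)), (0:ℝ)))
        have hEq : (⟨fun x => σ (k+1) (α * u x + β),
            (hσ (k+1) (Nat.succ_le_succ (Nat.zero_le _)) le_rfl).comp
              ((continuous_const.mul u.continuous).add continuous_const)⟩ : C(K, ℝ))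
            = Psi σ w (k+1) hσ K (θ', ((fun _ => (1:ℝ)), (0:ℝ))) := by
          ext x
          show σ (k+1) (α * u x + β)
            = (∑ j, (1:ℝ) * hiddenOut σ w (k+1) θ' (k+1) le_rfl (↑x) j) + 0
          have hsum1 : (∑ j, (1:ℝ) * hiddenOut σ w (k+1) θ' (k+1) le_rfl (↑x) j)
              = (1:ℝ) * hiddenOut σ w (k+1) θ' (k+1) le_rfl (↑x) 0 :=
            Fin.sum_univ_one _
          rw [hsum1, one_mul, add_zero, hhid le_rfl x]
          rfl
        rw [hEq]
        exact h
    | succ m ih =>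
        intro k hmk hk θ a c g hg
        have hk1 : k + 1 ≤ L := by omega
        set u : C(K, ℝ) := ⟨fun x => (∑ j, a j * hiddenOut σ w L θ k hk (↑x) j) + c,
          contAff θ k hk a c⟩ with hu
        refine key_step hKc T u (σ (k+1)) (hσ (k+1) (Nat.succ_le_succ (Nat.zero_le _)) hk1)
          (hσnp (k+1) (Nat.succ_le_succ (Nat.zero_le _)) hk1) ?_ g hg
        intro α β
        set θ' := Function.update θ ⟨k, hk1⟩
          ((fun _ j => α * a j), (fun _ => α * c + β)) with hθ'
        have hagree : ∀ i : Fin L, (i : ℕ) < k → θ' i = θ i := by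
          intro i hi
          rw [hθ']
          exact Function.update_of_ne (fun hEq => by
            rw [hEq] at hi
            exact Nat.lt_irrefl k hi) _ _
        have hhid : ∀ (x : K),
            hiddenOut σ w L θ' (k+1) hk1 (↑x) 0
              = σ (k+1) (α * ((∑ j, a j * hiddenOut σ w L θ k hk (↑x) j) + c) + β) := by
          intro x
          simp only [hiddenOut]
          rw [hiddenOut_congr σ w L θ' θ k (Nat.le_of_succ_le hk1) hagree]
          have hval : θ' ⟨k, hk1⟩ = ((fun _ j => α * a j), (fun _ => α * c + β)) := by
            rw [hθ']
            exact Function.update_self _ _ _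
          rw [hval]
          congr 1
          have hs : (∑ j, (α * a j) * hiddenOut σ w L θ k (Nat.le_of_succ_le hk1) (↑x) j)
              = α * (∑ j, a j * hiddenOut σ w L θ k (Nat.le_of_succ_le hk1) (↑x) j) := by
            rw [Finset.mul_sum]
            exact Finset.sum_congr rfl fun j _ => by ring
          have hproof : hiddenOut σ w L θ k (Nat.le_of_succ_le hk1) (↑x : Fin (w 0) → ℝ)
              = hiddenOut σ w L θ k hk (↑x : Fin (w 0) → ℝ) := rfl
          rw [hproof] at hs
          rw [hs]
          ring
        have h := ih (k+1) (by omega) hk1 θ' (fun _ => (1:ℝ)) 0 id continuous_id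
        have hEq : (⟨fun x => σ (k+1) (α * u x + β),
            (hσ (k+1) (Nat.succ_le_succ (Nat.zero_le _)) hk1).comp
              ((continuous_const.mul u.continuous).add continuous_const)⟩ : C(K, ℝ))
            = ⟨fun x => id ((∑ j, (1:ℝ) * hiddenOut σ w L θ' (k+1) hk1 (↑x) j) + 0),
                continuous_id.comp (contAff θ' (k+1) hk1 (fun _ => (1:ℝ)) 0)⟩ := by
          ext x
          show σ (k+1) (α * u x + β)
            = id ((∑ j, (1:ℝ) * hiddenOut σ w L θ' (k+1) hk1 (↑x) j) + 0)
          have hsum1 : (∑ j, (1:ℝ) * hiddenOut σ w L θ' (k+1) hk1 (↑x) j)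
              = (1:ℝ) * hiddenOut σ w L θ' (k+1) hk1 (↑x) 0 :=
            Fin.sum_univ_one _
          rw [id, hsum1, one_mul, add_zero, hhid x]
          rfl
        rw [hEq]
        exact h
  -- conclusion via Stone-Weierstrass with exponentials
  set θ0 : ∀ i : Fin L, ((Fin (w (i + 1)) → Fin (w i) → ℝ) × (Fin (w (i + 1)) → ℝ)) :=
    fun _ => ((fun _ _ => 0), (fun _ => 0)) with hθ0
  have hfinal : ∀ (a : Fin d → ℝ) (g : ℝ → ℝ) (hg : Continuous g),
      T ⟨fun x => g ((∑ j, a j * (x : Fin d → ℝ) j) + 0),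
        hg.comp ((continuous_finset_sum _ fun j _ =>
          continuous_const.mul ((continuous_apply j).comp continuous_subtype_val)).add
          continuous_const)⟩ = 0 := by
    intro a g hg
    exact main (L - 1) 0 (by omega) (Nat.zero_le L) θ0 a 0 g hg
  set E : (Fin d → ℝ) → C(K, ℝ) := fun a =>
    ⟨fun x => Real.exp ((∑ j, a j * (x : Fin d → ℝ) j) + 0),
      Real.continuous_exp.comp ((continuous_finset_sum _ fun j _ =>
        continuous_const.mul ((continuous_apply j).comp continuous_subtype_val)).add
        continuous_const)⟩ with hE
  have hexp : ∀ a, T (E a) = 0 := fun a => hfinal a Real.exp Real.continuous_exp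
  have hmul : ∀ a b, E a * E b = E (a + b) := by
    intro a b
    ext x
    simp only [hE, ContinuousMap.mul_apply, ContinuousMap.coe_mk, add_zero]
    rw [← Real.exp_add]
    congr 1
    rw [← Finset.sum_add_distrib]
    exact Finset.sum_congr rfl fun j _ => by simp [add_mul]
  have hone : E 0 = 1 := by
    ext x
    simp [hE]
  set M : Submonoid C(K, ℝ) :=
    { carrier := Set.range E
      one_mem' := ⟨0, hone⟩
      mul_mem' := by
        rintro f g ⟨a, rfl⟩ ⟨b, rfl⟩
        exact ⟨a + b, (hmul a b).symm⟩ } with hM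
  set A : Subalgebra ℝ C(K, ℝ) := Algebra.adjoin ℝ (Set.range E) with hA
  have hAzero : ∀ g ∈ A, T g = 0 := by
    intro g hg
    have h2 := Algebra.adjoin_eq_span (R := ℝ) (s := Set.range E)
    have h3 : (Submonoid.closure (Set.range E) : Set C(K, ℝ)) = Set.range E := by
      rw [show Set.range E = (M : Set C(K, ℝ)) from rfl, Submonoid.closure_eq]
    have h1 : g ∈ Submodule.span ℝ (Set.range E) := by
      have hg' : g ∈ Subalgebra.toSubmodule (Algebra.adjoin ℝ (Set.range E)) := hg
      rw [h2] at hg'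
      rwa [h3] at hg'
    refine Submodule.span_induction ?_ ?_ ?_ ?_ h1
    · rintro f ⟨a, rfl⟩
      exact hexp a
    · simp
    · intro f g _ _ hf hg
      rw [map_add, hf, hg, add_zero]
    · intro r f _ hf
      rw [map_smul, hf, smul_zero]
  have hsep : A.SeparatesPoints := by
    intro x y hxy
    have hval : ∃ i, (x : Fin d → ℝ) i ≠ (y : Fin d → ℝ) i := by
      by_contra hcon
      push_neg at hcon
      exact hxy (Subtype.ext (funext hcon))
    obtain ⟨i, hi⟩ := hval
    refine ⟨_, ⟨E (Pi.single i 1), Algebra.subset_adjoin ⟨Pi.single i 1, rfl⟩, rfl⟩, ?_⟩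
    have hx : ∀ z : K, (∑ j, (Pi.single i (1:ℝ) : Fin d → ℝ) j * (z : Fin d → ℝ) j) = (z : Fin d → ℝ) i := by
      intro z
      rw [Finset.sum_eq_single i]
      · simp
      · intro j _ hj
        simp [Pi.single_apply, hj]
      · intro hmem
        exact absurd (Finset.mem_univ i) hmem
    simp only [hE, ContinuousMap.coe_mk, add_zero]
    rw [hx x, hx y]
    exact fun h => hi (Real.exp_injective h)
  have htop : A.topologicalClosure = ⊤ :=
    ContinuousMap.subalgebra_topologicalClosure_eq_top_of_separatesPoints A hsep
  have hdense : Dense (A : Set C(K, ℝ)) := by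
    rw [dense_iff_closure_eq, ← Subalgebra.topologicalClosure_coe, htop]
    simp
  ext g
  show T g = 0
  exact congrFun (Continuous.ext_on hdense T.continuous continuous_const
    (fun g hg => hAzero g hg)) g
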